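/- Let n ≥ 3 be an integer and let l_1, …, l_n ∈ ℕ ∪ {∞} satisfy l_i ≥ 3 for every i, with l_i = ∞ for at least one index i. If the curvature κ = 1 − n/2 + Σ_{i=1}^n 1/l_i (with 1/∞ = 0) is strictly negative, then κ ≤ −1/42. -/

import Mathlib

noncomputable def einv : ℕ∞ → ℝ
  | ⊤ => 0
  | (m : ℕ) => (m : ℝ)⁻¹

lemma einv_top : einv ⊤ = 0 := rfl

lemma einv_coe (k : ℕ) : einv (k : ℕ∞) = (k : ℝ)⁻¹ := rfl

lemma einv_nonneg (l : ℕ∞) : 0 ≤ einv l := by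
  cases l with
  | top => simp [einv_top]
  | coe k => rw [einv_coe]; positivity

lemma einv_le_third {l : ℕ∞} (h : 3 ≤ l) : einv l ≤ 1/3 := by
  cases l with
  | top => simp [einv_top]
  | coe k =>
    rw [einv_coe]
    have hk : (3:ℕ) ≤ k := by exact_mod_cast h
    have : (3:ℝ) ≤ k := by exact_mod_cast hk
    rw [inv_le_comm₀ (by linarith) (by norm_num)]
    linarith

lemma einv_gap {m : ℕ} (hm : 0 < m) {l : ℕ∞} (h : einv l < (m:ℝ)⁻¹) :
    einv l ≤ ((m:ℝ)+1)⁻¹ := by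
  cases l with
  | top => rw [einv_top]; positivity
  | coe k =>
    rw [einv_coe] at *
    rcases Nat.eq_zero_or_pos k with hk | hk
    · simp [hk]; positivity
    · have hmk : m < k := by
        by_contra hc
        push_neg at hc
        have : (k:ℝ)⁻¹ ≥ (m:ℝ)⁻¹ := by
          apply inv_anti₀
          · exact_mod_cast hk
          · exact_mod_cast hc
        linarith
      have : ((m:ℝ)+1) ≤ k := by exact_mod_cast hmk
      apply inv_anti₀ (by positivity) this

lemma einv_lower {m : ℕ} (hm : 0 < m) {l : ℕ∞} (h : ((m:ℝ)+1)⁻¹ < einv l) :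
    (m:ℝ)⁻¹ ≤ einv l := by
  cases l with
  | top =>
    exfalso; rw [einv_top] at h
    have : (0:ℝ) < ((m:ℝ)+1)⁻¹ := by positivity
    linarith
  | coe k =>
    rw [einv_coe] at *
    rcases Nat.eq_zero_or_pos k with hk | hk
    · exfalso; simp [hk] at h
      have : (0:ℝ) < ((m:ℝ)+1)⁻¹ := by positivity
      linarith
    · have hkm : k ≤ m := by
        by_contra hc
        push_neg at hc
        have : (k:ℝ)⁻¹ ≤ ((m:ℝ)+1)⁻¹ := by
          apply inv_anti₀ (by positivity)
          exact_mod_cast hc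
        linarith
      apply inv_anti₀
      · exact_mod_cast hk
      · exact_mod_cast hkm

lemma einv_third_or_quarter {l : ℕ∞} (h : 3 ≤ l) : einv l = 1/3 ∨ einv l ≤ 1/4 := by
  cases l with
  | top => right; simp [einv_top]
  | coe k =>
    have hk : (3:ℕ) ≤ k := by exact_mod_cast h
    rcases eq_or_lt_of_le hk with he | hlt
    · left; rw [einv_coe, ← he]; norm_num
    · right
      rw [einv_coe]
      have h4 : (4:ℝ) ≤ k := by exact_mod_cast hlt
      rw [inv_le_comm₀ (by linarith) (by norm_num)]
      linarith

lemma key' {a b : ℕ∞} (ha : 3 ≤ a) (hb : 3 ≤ b) (hab : einv a ≤ einv b)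
    (h : einv a + einv b < 1/2) : einv a + einv b ≤ 10/21 := by
  have hb3 : einv b ≤ 1/3 := einv_le_third hb
  have ha0 : 0 ≤ einv a := einv_nonneg a
  by_cases h7 : einv a ≤ 1/7
  · linarith
  · push_neg at h7
    have h6 : (6:ℝ)⁻¹ ≤ einv a := by
      have := einv_lower (m := 6) (by norm_num) (l := a) (by norm_num; linarith)
      exact_mod_cast this
    have hx : einv a < (4:ℝ)⁻¹ := by norm_num; linarith
    have hx5 : einv a ≤ 1/5 := by
      have := einv_gap (m := 4) (by norm_num) hx
      norm_num at this ⊢; linarith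
    have hy : einv b < (3:ℝ)⁻¹ := by norm_num; linarith
    have hy4 : einv b ≤ 1/4 := by
      have := einv_gap (m := 3) (by norm_num) hy
      norm_num at this ⊢; linarith
    linarith

lemma key {a b : ℕ∞} (ha : 3 ≤ a) (hb : 3 ≤ b)
    (h : einv a + einv b < 1/2) : einv a + einv b ≤ 10/21 := by
  rcases le_total (einv a) (einv b) with hab | hab
  · exact key' ha hb hab h
  · have := key' hb ha hab (by linarith)
    linarith

/-- If `n ≥ 3`, `l₁, …, lₙ ∈ ℕ ∪ {∞}` all satisfy `lᵢ ≥ 3`, at least one `lᵢ = ∞`,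
and the curvature `κ = 1 − n/2 + Σᵢ 1/lᵢ` (with `1/∞ = 0`) is strictly negative,
then `κ ≤ −1/42`. -/
theorem stmt_2 (n : ℕ) (hn : 3 ≤ n) (l : Fin n → ℕ∞) (hl : ∀ i, 3 ≤ l i)
    (hinf : ∃ i, l i = ⊤)
    (hneg : 1 - (n : ℝ) / 2 + ∑ i, einv (l i) < 0) :
    1 - (n : ℝ) / 2 + ∑ i, einv (l i) ≤ -1 / 42 := by
  obtain ⟨i₀, hi₀⟩ := hinf
  rcases lt_or_ge n 5 with h5 | h5
  · interval_cases n
    · -- n = 3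
      rw [Fin.sum_univ_three] at *
      norm_num at hneg ⊢
      fin_cases i₀ <;> simp only [Fin.zero_eta, Fin.mk_one, Fin.reduceFinMk, Fin.isValue] at hi₀ <;>
        rw [hi₀, einv_top] at hneg ⊢ <;>
        [ (have := key (hl 1) (hl 2) (by linarith));
          (have := key (hl 0) (hl 2) (by linarith));
          (have := key (hl 0) (hl 1) (by linarith))] <;> linarith
    · -- n = 4
      rw [Fin.sum_univ_four] at *
      norm_num at hneg ⊢
      fin_cases i₀ <;> simp only [Fin.zero_eta, Fin.mk_one, Fin.reduceFinMk, Fin.isValue] at hi₀ <;>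
        rw [hi₀, einv_top] at hneg ⊢ <;>
        [ (rcases einv_third_or_quarter (hl 1) with h1|h1 <;>
           rcases einv_third_or_quarter (hl 2) with h2|h2 <;>
           rcases einv_third_or_quarter (hl 3) with h3|h3 <;> linarith);
          (rcases einv_third_or_quarter (hl 0) with h1|h1 <;>
           rcases einv_third_or_quarter (hl 2) with h2|h2 <;>
           rcases einv_third_or_quarter (hl 3) with h3|h3 <;> linarith);
          (rcases einv_third_or_quarter (hl 0) with h1|h1 <;>
           rcases einv_third_or_quarter (hl 1) with h2|h2 <;>
           rcases einv_third_or_quarter (hl 3) with h3|h3 <;> linarith);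
          (rcases einv_third_or_quarter (hl 0) with h1|h1 <;>
           rcases einv_third_or_quarter (hl 1) with h2|h2 <;>
           rcases einv_third_or_quarter (hl 2) with h3|h3 <;> linarith)]
  · -- n ≥ 5
    have hsum : ∑ i, einv (l i) ≤ ((n:ℝ) - 1) / 3 := by
      have h1 : ∑ i, einv (l i) = ∑ i ∈ Finset.univ.erase i₀, einv (l i) := by
        rw [← Finset.add_sum_erase _ _ (Finset.mem_univ i₀), hi₀, einv_top, zero_add]
      rw [h1]
      have h2 : ∑ i ∈ Finset.univ.erase i₀, einv (l i) ≤
          (Finset.univ.erase i₀).card • (1/3 : ℝ) :=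
        Finset.sum_le_card_nsmul _ _ _ (fun i _ => einv_le_third (hl i))
      have hcard : (Finset.univ.erase i₀).card = n - 1 := by
        rw [Finset.card_erase_of_mem (Finset.mem_univ i₀), Finset.card_univ, Fintype.card_fin]
      rw [hcard] at h2
      have : ((n - 1 : ℕ) : ℝ) = (n:ℝ) - 1 := by
        have : 1 ≤ n := by omega
        push_cast [this]; ring
      rw [nsmul_eq_mul, this] at h2
      linarith
    have hn5 : (5:ℝ) ≤ (n:ℝ) := by exact_mod_cast h5
    linarith
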